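/- Suppose a, b are nonzero vectors in the plane ℝ² with |a| ≤ |a - b| and |b| ≤ |a - b|. Then the normalized vectors satisfy |a/|a| - b/|b|| ≥ 1, i.e., the angle between a and b is at least 60 degrees. -/

import Mathlib

/-- Lemma 2.5 of Mattila-type: if `a, b` are nonzero vectors in the
plane with `‖a‖ ≤ ‖a - b‖` and `‖b‖ ≤ ‖a - b‖`, then the normalized vectors satisfy
`‖a/‖a‖ - b/‖b‖‖ ≥ 1`, i.e. the angle between `a` and `b` is at least 60 degrees. -/
theorem stmt0 (a b : EuclideanSpace ℝ (Fin 2)) (ha : a ≠ 0) (hb : b ≠ 0)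
    (hab1 : ‖a‖ ≤ ‖a - b‖) (hab2 : ‖b‖ ≤ ‖a - b‖) :
    1 ≤ ‖‖a‖⁻¹ • a - ‖b‖⁻¹ • b‖ := by
  have hna : (0:ℝ) < ‖a‖ := norm_pos_iff.2 ha
  have hnb : (0:ℝ) < ‖b‖ := norm_pos_iff.2 hb
  have e : ‖a - b‖^2 = ‖a‖^2 - 2 * inner ℝ a b + ‖b‖^2 := norm_sub_sq_real a b
  have h1 : ‖a‖^2 ≤ ‖a - b‖^2 := by nlinarith [norm_nonneg a]
  have h2 : ‖b‖^2 ≤ ‖a - b‖^2 := by nlinarith [norm_nonneg b]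
  have key : 2 * (inner ℝ a b : ℝ) ≤ ‖a‖ * ‖b‖ := by nlinarith
  have e2 : ‖‖a‖⁻¹ • a - ‖b‖⁻¹ • b‖^2
      = 2 - 2 * (‖a‖⁻¹ * ‖b‖⁻¹ * inner ℝ a b) := by
    rw [norm_sub_sq_real, inner_smul_left, inner_smul_right, norm_smul, norm_smul]
    simp [abs_of_pos, hna, hnb, mul_pow]
    field_simp
    ring
  have hle : ‖a‖⁻¹ * ‖b‖⁻¹ * (inner ℝ a b : ℝ) ≤ 1/2 := by
    rw [le_div_iff₀ (by norm_num : (0:ℝ) < 2)]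
    have := mul_le_mul_of_nonneg_left key (by positivity : (0:ℝ) ≤ ‖a‖⁻¹ * ‖b‖⁻¹)
    calc ‖a‖⁻¹ * ‖b‖⁻¹ * (inner ℝ a b : ℝ) * 2 = ‖a‖⁻¹ * ‖b‖⁻¹ * (2 * inner ℝ a b) := by ring
      _ ≤ ‖a‖⁻¹ * ‖b‖⁻¹ * (‖a‖ * ‖b‖) := this
      _ = 1 := by field_simp
  have : 1 ≤ ‖‖a‖⁻¹ • a - ‖b‖⁻¹ • b‖^2 := by rw [e2]; linarith
  nlinarith [norm_nonneg (‖a‖⁻¹ • a - ‖b‖⁻¹ • b)]
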